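/- If a prover strategy in one iteration of the 3-challenge Stern protocol can produce valid responses to all three challenges (for the same commitments c₁, c₂, c₃ under a perfectly binding commitment), then from those responses one can extract a vector x with Hxᵀ = yᵀ and wt(x) = w. Concretely: if there exist a permutation π and vectors u, z, a, b ∈ F_2^n with (i) Huᵀ committed in c₁ and π[u] committed in c₂ (challenge 0), (ii) Hzᵀ − yᵀ committed in c₁ and π[z] committed in c₃ (challenge 1), and (iii) a committed in c₂, a + b committed in c₃, wt(b) = w (challenge 2), then binding forces a = π[u], π[z] = π[u] + b, and hence x := π^{-1}[b] satisfies Hxᵀ = yᵀ and wt(x) = w. -/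
import Mathlib


/-- Hamming weight. -/
def wt {n : ℕ} (x : Fin n → ZMod 2) : ℕ :=
  (Finset.univ.filter fun i => x i ≠ 0).card

/-- Knowledge extraction for one iteration of the 3-challenge Stern protocol with
perfectly binding commitments (modeled as injective commitment functions): from
valid responses to all three challenges one extracts `x := π⁻¹[b]` with
`Hxᵀ = yᵀ` and `wt x = w`. -/
theorem stern_extraction {n k w : ℕ} {C : Type*}
    (H : Matrix (Fin (n - k)) (Fin n) (ZMod 2)) (y : Fin (n - k) → ZMod 2)
    (com₁ : (Fin (n - k) → ZMod 2) → C) (com₂ com₃ : (Fin n → ZMod 2) → C)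
    (h₁ : Function.Injective com₁) (h₂ : Function.Injective com₂)
    (h₃ : Function.Injective com₃)
    (c₁ c₂ c₃ : C) (π : Equiv.Perm (Fin n)) (u z a b : Fin n → ZMod 2)
    -- challenge 0: `Huᵀ` committed in `c₁`, `π[u]` committed in `c₂`
    (hc₁u : c₁ = com₁ (H.mulVec u)) (hc₂u : c₂ = com₂ (u ∘ π))
    -- challenge 1: `Hzᵀ − yᵀ` committed in `c₁`, `π[z]` committed in `c₃`
    (hc₁z : c₁ = com₁ (H.mulVec z - y)) (hc₃z : c₃ = com₃ (z ∘ π))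
    -- challenge 2: `a` committed in `c₂`, `a + b` committed in `c₃`, `wt b = w`
    (hc₂a : c₂ = com₂ a) (hc₃ab : c₃ = com₃ (a + b)) (hb : wt b = w) :
    a = u ∘ π ∧ z ∘ π = u ∘ π + b ∧
      H.mulVec (b ∘ ⇑π⁻¹) = y ∧ wt (b ∘ ⇑π⁻¹) = w := by
  have ha : a = u ∘ π := (h₂ (hc₂u.symm.trans hc₂a)).symm
  have hz : z ∘ π = a + b := h₃ (hc₃z.symm.trans hc₃ab)
  have hzu : z ∘ π = u ∘ π + b := ha ▸ hz
  have hbz : b = (z - u) ∘ π := by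
    funext i
    have := congrFun hzu i
    simp only [Pi.add_apply, Function.comp_apply, Pi.sub_apply] at this ⊢
    rw [this]; ring
  have hby : b ∘ ⇑π⁻¹ = z - u := by
    funext i
    simp [hbz]
  have hH : H.mulVec u = H.mulVec z - y := h₁ (hc₁u.symm.trans hc₁z)
  refine ⟨ha, hzu, ?_, ?_⟩
  · rw [hby]
    have := Matrix.mulVec_sub H z u
    rw [this, hH]
    abel
  · rw [← hb]
    unfold wt
    apply Finset.card_bij (fun i _ => π⁻¹ i)
    · intro i hi
      simp only [Finset.mem_filter, Finset.mem_univ, true_and] at hi ⊢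
      simpa using hi
    · intro i _ j _ h
      exact π⁻¹.injective h
    · intro j hj
      exact ⟨π j, by simpa using hj, by simp⟩
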